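/- Let m ≥ n > 0 > k be integers, and define u₁(x) = sin(x)·√(k/(k−m)), u₂(x) = cos(x)·√(k/(k−n)), u₃(x) = √(n·cos²x/(n−k) + m·sin²x/(m−k)), and r(x,y) = (u₁(x)e^{2πimy}, u₂(x)e^{2πiny}, u₃(x)e^{2πiky}) ∈ ℂ³. Then for all (x,y): ⟨r,r⟩ = 1, ⟨r_x,r⟩ = ⟨r_y,r⟩ = ⟨r_x,r_y⟩ = 0, ⟨r_x,r_x⟩ = −k(m+n−(m−n)cos 2x)/(2mn − k(m+n) + k(m−n)cos 2x), and ⟨r_y,r_y⟩ = −2kπ²(m+n−(m−n)cos 2x). In particular the induced metric on the surface Σ_{m,n,k} = image of r under the Hopf projection is ds² = 2e^{v₁(x)}dx² + 2e^{v₂(x)}dy² with 2e^{v₁} = ⟨r_x,r_x⟩ and 2e^{v₂} = ⟨r_y,r_y⟩ as above. -/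

import Mathlib

set_option maxHeartbeats 1000000


open Complex Real

/-- Partial derivative in the first variable. -/
noncomputable def pdx {E : Type*} [NormedAddCommGroup E] [NormedSpace ℝ E]
    (f : ℝ → ℝ → E) (x y : ℝ) : E := deriv (fun x' => f x' y) x

/-- Partial derivative in the second variable. -/
noncomputable def pdy {E : Type*} [NormedAddCommGroup E] [NormedSpace ℝ E]
    (f : ℝ → ℝ → E) (x y : ℝ) : E := deriv (fun y' => f x y') y

/-- Hermitian inner product ⟨a,b⟩ = ∑ aᵢ conj(bᵢ) on ℂ³. -/
noncomputable def herm (a b : Fin 3 → ℂ) : ℂ := ∑ i, a i * starRingEnd ℂ (b i)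

/-- The map `r(x,y) = (u₁(x)e^{2πimy}, u₂(x)e^{2πiny}, u₃(x)e^{2πiky})` is a horizontal
lift of `Σ_{m,n,k}` with induced metric `ds² = 2e^{v₁(x)}dx² + 2e^{v₂(x)}dy²`, where
`2e^{v₁} = −k(m+n−(m−n)cos2x)/(2mn−k(m+n)+k(m−n)cos2x)` and
`2e^{v₂} = −2kπ²(m+n−(m−n)cos2x)`. -/

lemma herm_mul (a1 a2 a3 b1 b2 b3 t1 t2 t3 : ℂ)
    (h1 : t1 * starRingEnd ℂ t1 = 1) (h2 : t2 * starRingEnd ℂ t2 = 1)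
    (h3 : t3 * starRingEnd ℂ t3 = 1) :
    herm ![a1*t1, a2*t2, a3*t3] ![b1*t1, b2*t2, b3*t3]
      = a1 * starRingEnd ℂ b1 + a2 * starRingEnd ℂ b2 + a3 * starRingEnd ℂ b3 := by
  simp only [herm, Fin.sum_univ_three, Matrix.cons_val_zero, Matrix.cons_val_one,
    Matrix.head_cons, Matrix.cons_val_two, Matrix.tail_cons, map_mul]
  linear_combination (a1 * starRingEnd ℂ b1) * h1 + (a2 * starRingEnd ℂ b2) * h2
    + (a3 * starRingEnd ℂ b3) * h3

lemma exp_conj_self (c y : ℝ) :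
    Complex.exp (2 * Real.pi * (c:ℝ) * y * Complex.I)
      * starRingEnd ℂ (Complex.exp (2 * Real.pi * (c:ℝ) * y * Complex.I)) = 1 := by
  rw [← Complex.exp_conj, ← Complex.exp_add]
  have : (starRingEnd ℂ) (2 * ↑Real.pi * ↑c * ↑y * Complex.I)
      = -(2 * ↑Real.pi * ↑c * ↑y * Complex.I) := by
    simp only [map_mul, Complex.conj_ofReal, Complex.conj_I, map_ofNat]; ring
  rw [this, add_neg_cancel, Complex.exp_zero]

theorem mnk_lift_is_horizontal
    (m n k : ℤ) (hmn : n ≤ m) (hn : 0 < n) (hk : k < 0)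
    (u1 u2 u3 : ℝ → ℝ)
    (hu1 : ∀ x, u1 x = Real.sin x * Real.sqrt ((k : ℝ) / ((k : ℝ) - (m : ℝ))))
    (hu2 : ∀ x, u2 x = Real.cos x * Real.sqrt ((k : ℝ) / ((k : ℝ) - (n : ℝ))))
    (hu3 : ∀ x, u3 x = Real.sqrt ((n : ℝ) * (Real.cos x)^2 / ((n : ℝ) - (k : ℝ))
      + (m : ℝ) * (Real.sin x)^2 / ((m : ℝ) - (k : ℝ))))
    (r : ℝ → ℝ → Fin 3 → ℂ)
    (hr : ∀ x y, r x y =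
      ![(u1 x : ℂ) * Complex.exp (2 * Real.pi * (m : ℝ) * y * Complex.I),
        (u2 x : ℂ) * Complex.exp (2 * Real.pi * (n : ℝ) * y * Complex.I),
        (u3 x : ℂ) * Complex.exp (2 * Real.pi * (k : ℝ) * y * Complex.I)]) :
    ∀ x y,
      herm (r x y) (r x y) = 1 ∧
      herm (pdx r x y) (r x y) = 0 ∧
      herm (pdy r x y) (r x y) = 0 ∧
      herm (pdx r x y) (pdy r x y) = 0 ∧
      herm (pdx r x y) (pdx r x y) =
        ((-(k : ℝ) * ((m : ℝ) + (n : ℝ) - ((m : ℝ) - (n : ℝ)) * Real.cos (2 * x)) /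
          (2 * (m : ℝ) * (n : ℝ) - (k : ℝ) * ((m : ℝ) + (n : ℝ))
            + (k : ℝ) * ((m : ℝ) - (n : ℝ)) * Real.cos (2 * x)) : ℝ) : ℂ) ∧
      herm (pdy r x y) (pdy r x y) =
        ((-2 * (k : ℝ) * Real.pi^2 *
          ((m : ℝ) + (n : ℝ) - ((m : ℝ) - (n : ℝ)) * Real.cos (2 * x)) : ℝ) : ℂ) := by
  intro x y
  -- basic positivity
  have hm0 : (0:ℝ) < (m:ℝ) := by exact_mod_cast lt_of_lt_of_le hn hmn
  have hn0 : (0:ℝ) < (n:ℝ) := by exact_mod_cast hn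
  have hk0 : (k:ℝ) < 0 := by exact_mod_cast hk
  have hmn' : (n:ℝ) ≤ (m:ℝ) := by exact_mod_cast hmn
  have hmk : (0:ℝ) < (m:ℝ) - k := by linarith
  have hnk : (0:ℝ) < (n:ℝ) - k := by linarith
  have hkm : (k:ℝ) - m < 0 := by linarith
  have hkn : (k:ℝ) - n < 0 := by linarith
  have hq1 : (0:ℝ) ≤ (k:ℝ) / ((k:ℝ) - m) := by
    rw [div_nonneg_iff]; right; constructor <;> linarith
  have hq2 : (0:ℝ) ≤ (k:ℝ) / ((k:ℝ) - n) := by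
    rw [div_nonneg_iff]; right; constructor <;> linarith
  set s1 : ℝ := Real.sqrt ((k:ℝ) / ((k:ℝ) - m)) with hs1def
  set s2 : ℝ := Real.sqrt ((k:ℝ) / ((k:ℝ) - n)) with hs2def
  have hs1 : s1 * s1 = (k:ℝ) / ((k:ℝ) - m) := Real.mul_self_sqrt hq1
  have hs2 : s2 * s2 = (k:ℝ) / ((k:ℝ) - n) := Real.mul_self_sqrt hq2
  set g : ℝ → ℝ := fun t => (n:ℝ) * (Real.cos t)^2 / ((n:ℝ) - k)
      + (m:ℝ) * (Real.sin t)^2 / ((m:ℝ) - k) with hgdef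
  have hgpos : 0 < g x := by
    have hsc := Real.sin_sq_add_cos_sq x
    have h1 : 0 < (n:ℝ) / ((n:ℝ) - k) := div_pos hn0 hnk
    have h2 : 0 < (m:ℝ) / ((m:ℝ) - k) := div_pos hm0 hmk
    have e : g x = (n:ℝ)/((n:ℝ)-k) * (Real.cos x)^2 + (m:ℝ)/((m:ℝ)-k) * (Real.sin x)^2 := by
      simp only [hgdef]; ring
    rw [e]
    rcases le_or_gt ((Real.cos x)^2) (1/2) with h | h
    · have hs : (1:ℝ)/2 ≤ Real.sin x ^ 2 := by linarith
      have t2 : (m:ℝ)/((m:ℝ)-k)*(1/2) ≤ (m:ℝ)/((m:ℝ)-k)*Real.sin x^2 :=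
        mul_le_mul_of_nonneg_left hs h2.le
      have t1 : 0 ≤ (n:ℝ)/((n:ℝ)-k)*Real.cos x^2 := mul_nonneg h1.le (sq_nonneg _)
      linarith
    · have t2 : (n:ℝ)/((n:ℝ)-k)*(1/2) ≤ (n:ℝ)/((n:ℝ)-k)*Real.cos x^2 :=
        mul_le_mul_of_nonneg_left h.le h1.le
      have t1 : 0 ≤ (m:ℝ)/((m:ℝ)-k)*Real.sin x^2 := mul_nonneg h2.le (sq_nonneg _)
      linarith
  have hgs : Real.sqrt (g x) * Real.sqrt (g x) = g x := Real.mul_self_sqrt hgpos.le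
  have hgsne : Real.sqrt (g x) ≠ 0 := ne_of_gt (Real.sqrt_pos.mpr hgpos)
  -- derivatives of u's
  have hu1f : u1 = fun t => Real.sin t * s1 := funext hu1
  have hu2f : u2 = fun t => Real.cos t * s2 := funext hu2
  have hu3f : u3 = fun t => Real.sqrt (g t) := funext hu3
  have du1 : HasDerivAt u1 (Real.cos x * s1) x := by
    rw [hu1f]; exact (Real.hasDerivAt_sin x).mul_const s1
  have du2 : HasDerivAt u2 (-Real.sin x * s2) x := by
    rw [hu2f]
    simpa using (Real.hasDerivAt_cos x).mul_const s2
  have dg : HasDerivAt g ((n:ℝ) * (2 * Real.cos x ^ 1 * -Real.sin x) / ((n:ℝ) - k)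
      + (m:ℝ) * (2 * Real.sin x ^ 1 * Real.cos x) / ((m:ℝ) - k)) x := by
    exact ((((Real.hasDerivAt_cos x).pow 2).const_mul (n:ℝ)).div_const _).add
      ((((Real.hasDerivAt_sin x).pow 2).const_mul (m:ℝ)).div_const _)
  set G : ℝ := (n:ℝ) * (2 * Real.cos x ^ 1 * -Real.sin x) / ((n:ℝ) - k)
      + (m:ℝ) * (2 * Real.sin x ^ 1 * Real.cos x) / ((m:ℝ) - k) with hGdef
  set d3 : ℝ := 1 / (2 * Real.sqrt (g x)) * G with hd3def
  have du3 : HasDerivAt u3 d3 x := by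
    rw [hu3f]
    exact (Real.hasDerivAt_sqrt (ne_of_gt hgpos)).comp x dg
  -- exponentials
  set Em : ℂ := Complex.exp (2 * Real.pi * (m:ℝ) * y * Complex.I) with hEm
  set En : ℂ := Complex.exp (2 * Real.pi * (n:ℝ) * y * Complex.I) with hEn
  set Ek : ℂ := Complex.exp (2 * Real.pi * (k:ℝ) * y * Complex.I) with hEk
  have hcm : Em * starRingEnd ℂ Em = 1 := exp_conj_self (m:ℝ) y
  have hcn : En * starRingEnd ℂ En = 1 := exp_conj_self (n:ℝ) y
  have hck : Ek * starRingEnd ℂ Ek = 1 := exp_conj_self (k:ℝ) y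
  -- pdx
  have hpdx : pdx r x y = ![((Real.cos x * s1 : ℝ) : ℂ) * Em,
      ((-Real.sin x * s2 : ℝ) : ℂ) * En, ((d3 : ℝ) : ℂ) * Ek] := by
    unfold pdx
    have he : (fun x' => r x' y) = fun x' =>
        ![((u1 x' : ℝ) : ℂ) * Em, ((u2 x' : ℝ) : ℂ) * En, ((u3 x' : ℝ) : ℂ) * Ek] :=
      funext fun t => hr t y
    rw [he]
    apply HasDerivAt.deriv
    apply hasDerivAt_pi.mpr
    intro i
    fin_cases i
    · simpa using (du1.ofReal_comp).mul_const Em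
    · simpa using (du2.ofReal_comp).mul_const En
    · simpa using (du3.ofReal_comp).mul_const Ek
  -- pdy
  have keyE : ∀ c : ℝ, HasDerivAt (fun y' : ℝ =>
      Complex.exp (2 * Real.pi * (c:ℝ) * y' * Complex.I))
      ((2 * Real.pi * (c:ℝ) * Complex.I) * Complex.exp (2 * Real.pi * (c:ℝ) * y * Complex.I)) y := by
    intro c
    have harg : HasDerivAt (fun y' : ℝ => 2 * (Real.pi:ℂ) * (c:ℂ) * (y':ℂ) * Complex.I)
        (2 * (Real.pi:ℂ) * (c:ℂ) * Complex.I) y := by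
      simpa using (((hasDerivAt_id y).ofReal_comp).const_mul (2 * (Real.pi:ℂ) * (c:ℂ))).mul_const Complex.I
    simpa [mul_comm] using harg.cexp
  have hpdy : pdy r x y = ![((u1 x : ℝ) : ℂ) * (2 * Real.pi * (m:ℝ) * Complex.I) * Em,
      ((u2 x : ℝ) : ℂ) * (2 * Real.pi * (n:ℝ) * Complex.I) * En,
      ((u3 x : ℝ) : ℂ) * (2 * Real.pi * (k:ℝ) * Complex.I) * Ek] := by
    unfold pdy
    have he : (fun y' => r x y') = fun (y' : ℝ) =>
        ![((u1 x : ℝ) : ℂ) * Complex.exp (2 * Real.pi * (m:ℝ) * (y':ℝ) * Complex.I),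
          ((u2 x : ℝ) : ℂ) * Complex.exp (2 * Real.pi * (n:ℝ) * (y':ℝ) * Complex.I),
          ((u3 x : ℝ) : ℂ) * Complex.exp (2 * Real.pi * (k:ℝ) * (y':ℝ) * Complex.I)] :=
      funext fun t => hr x t
    rw [he]
    apply HasDerivAt.deriv
    apply hasDerivAt_pi.mpr
    intro i
    fin_cases i
    · have := ((keyE (m:ℝ)).const_mul ((u1 x : ℝ) : ℂ))
      simpa [hEm, mul_assoc, mul_comm, mul_left_comm] using this
    · have := ((keyE (n:ℝ)).const_mul ((u2 x : ℝ) : ℂ))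
      simpa [hEn, mul_assoc, mul_comm, mul_left_comm] using this
    · have := ((keyE (k:ℝ)).const_mul ((u3 x : ℝ) : ℂ))
      simpa [hEk, mul_assoc, mul_comm, mul_left_comm] using this
  clear_value s1 s2 g G d3 Em En Ek
  -- trig facts
  have hsc := Real.sin_sq_add_cos_sq x
  have hc2 : Real.cos (2*x) = 2 * Real.cos x ^ 2 - 1 := Real.cos_two_mul x
  have hs2x : Real.sin x ^ 2 = 1 - Real.cos x ^ 2 := Real.sin_sq x
  have hne1 : ((k:ℝ) - m) ≠ 0 := ne_of_lt hkm
  have hne2 : ((k:ℝ) - n) ≠ 0 := ne_of_lt hkn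
  have hne3 : ((n:ℝ) - k) ≠ 0 := ne_of_gt hnk
  have hne4 : ((m:ℝ) - k) ≠ 0 := ne_of_gt hmk
  have hu3x : u3 x = Real.sqrt (g x) := by rw [hu3 x, hgdef]
  -- squares
  have p1 : u1 x * u1 x = Real.sin x ^ 2 * ((k:ℝ)/((k:ℝ)-m)) := by
    rw [hu1 x]; linear_combination (Real.sin x)^2 * hs1
  have p2 : u2 x * u2 x = Real.cos x ^ 2 * ((k:ℝ)/((k:ℝ)-n)) := by
    rw [hu2 x]; linear_combination (Real.cos x)^2 * hs2
  have p3 : u3 x * u3 x = g x := by rw [hu3x]; exact hgs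
  have q1 : (Real.cos x * s1) * u1 x = Real.sin x * Real.cos x * ((k:ℝ)/((k:ℝ)-m)) := by
    rw [hu1 x]; linear_combination (Real.sin x * Real.cos x) * hs1
  have q2 : (-Real.sin x * s2) * u2 x = -(Real.sin x * Real.cos x) * ((k:ℝ)/((k:ℝ)-n)) := by
    rw [hu2 x]; linear_combination (-(Real.sin x * Real.cos x)) * hs2
  have q3 : d3 * u3 x = G / 2 := by
    rw [hu3x, hd3def]; field_simp
  have p5a : (Real.cos x * s1) * (Real.cos x * s1) = Real.cos x ^ 2 * ((k:ℝ)/((k:ℝ)-m)) := by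
    linear_combination (Real.cos x)^2 * hs1
  have p5b : (-Real.sin x * s2) * (-Real.sin x * s2) = Real.sin x ^ 2 * ((k:ℝ)/((k:ℝ)-n)) := by
    linear_combination (Real.sin x)^2 * hs2
  have p5c : d3 * d3 = G^2 / (4 * g x) := by
    have h : d3 * d3 = G^2 / (4 * (Real.sqrt (g x) * Real.sqrt (g x))) := by
      rw [hd3def]; ring
    rw [h, hgs]
  have hG2 : G^2 = (1 - Real.cos x ^ 2) * Real.cos x ^ 2 *
      (2*(m:ℝ)/((m:ℝ)-k) - 2*(n:ℝ)/((n:ℝ)-k))^2 := by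
    have h : G^2 = Real.sin x ^ 2 * Real.cos x ^ 2 *
        (2*(m:ℝ)/((m:ℝ)-k) - 2*(n:ℝ)/((n:ℝ)-k))^2 := by rw [hGdef]; ring
    rw [h, hs2x]
  -- real identities
  have R1 : u1 x * u1 x + u2 x * u2 x + u3 x * u3 x = 1 := by
    rw [p1, p2, p3]; simp only [hgdef]; rw [hs2x]; field_simp; ring
  have R2 : (Real.cos x * s1) * u1 x + (-Real.sin x * s2) * u2 x + d3 * u3 x = 0 := by
    rw [q1, q2, q3, hGdef]; field_simp; ring
  have R3 : (m:ℝ) * (u1 x * u1 x) + (n:ℝ) * (u2 x * u2 x) + (k:ℝ) * (u3 x * u3 x) = 0 := by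
    rw [p1, p2, p3]; simp only [hgdef]; rw [hs2x]; field_simp; ring
  have R4 : (m:ℝ) * ((Real.cos x * s1) * u1 x) + (n:ℝ) * ((-Real.sin x * s2) * u2 x)
      + (k:ℝ) * (d3 * u3 x) = 0 := by
    rw [q1, q2, q3, hGdef]; field_simp; ring
  have hgne : (n:ℝ) * Real.cos x ^ 2 / ((n:ℝ) - k)
      + (m:ℝ) * (1 - Real.cos x ^ 2) / ((m:ℝ) - k) ≠ 0 := by
    have h := hgpos
    simp only [hgdef] at h
    rw [hs2x] at h
    exact ne_of_gt h
  have hgne2 : (n:ℝ)*Real.cos x^2*((m:ℝ)-k) + (m:ℝ)*(1-Real.cos x^2)*((n:ℝ)-k) ≠ 0 := by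
    have w1 : 0 < (n:ℝ)*((m:ℝ)-k) := mul_pos hn0 hmk
    have w2 : 0 < (m:ℝ)*((n:ℝ)-k) := mul_pos hm0 hnk
    have e2 : (n:ℝ)*Real.cos x^2*((m:ℝ)-k) + (m:ℝ)*(1-Real.cos x^2)*((n:ℝ)-k)
        = ((n:ℝ)*((m:ℝ)-k))*Real.cos x^2 + ((m:ℝ)*((n:ℝ)-k))*(1-Real.cos x^2) := by ring
    rw [e2]
    rcases le_or_gt ((Real.cos x)^2) (1/2) with h | h
    · have t1 : 0 ≤ ((n:ℝ)*((m:ℝ)-k))*Real.cos x^2 := mul_nonneg w1.le (sq_nonneg _)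
      have t2 : ((m:ℝ)*((n:ℝ)-k))*(1/2) ≤ ((m:ℝ)*((n:ℝ)-k))*(1-Real.cos x^2) :=
        mul_le_mul_of_nonneg_left (by linarith) w2.le
      exact ne_of_gt (by linarith)
    · have t1 : 0 ≤ ((m:ℝ)*((n:ℝ)-k))*(1-Real.cos x^2) :=
        mul_nonneg w2.le (by linarith [Real.cos_sq_le_one x])
      have t2 : ((n:ℝ)*((m:ℝ)-k))*(1/2) ≤ ((n:ℝ)*((m:ℝ)-k))*Real.cos x^2 :=
        mul_le_mul_of_nonneg_left h.le w1.le
      exact ne_of_gt (by linarith)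
  have ht0 : (0:ℝ) ≤ Real.cos x ^ 2 := sq_nonneg _
  have ht1 : Real.cos x ^ 2 ≤ 1 := Real.cos_sq_le_one x
  have hDpos : 0 < 2*(m:ℝ)*n - k*((m:ℝ)+n) + k*((m:ℝ)-n)*Real.cos (2*x) := by
    rw [hc2]
    have key : 2*(m:ℝ)*n - k*((m:ℝ)+n) + k*((m:ℝ)-n)*(2*Real.cos x^2-1)
        = 2*((m:ℝ)*((n:ℝ)-k))*(1-Real.cos x^2) + 2*((n:ℝ)*((m:ℝ)-k))*Real.cos x^2 := by ring
    rw [key]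
    have w1 : 0 < (m:ℝ)*((n:ℝ)-k) := mul_pos hm0 hnk
    have w2 : 0 < (n:ℝ)*((m:ℝ)-k) := mul_pos hn0 hmk
    rcases le_or_gt ((Real.cos x)^2) (1/2) with h | h
    · have t1 : 2*((m:ℝ)*((n:ℝ)-k))*(1/2) ≤ 2*((m:ℝ)*((n:ℝ)-k))*(1-Real.cos x^2) :=
        mul_le_mul_of_nonneg_left (by linarith) (by linarith)
      have t2 : 0 ≤ 2*((n:ℝ)*((m:ℝ)-k))*Real.cos x^2 :=
        mul_nonneg (by linarith) (sq_nonneg _)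
      linarith
    · have t1 : 2*((n:ℝ)*((m:ℝ)-k))*(1/2) ≤ 2*((n:ℝ)*((m:ℝ)-k))*Real.cos x^2 :=
        mul_le_mul_of_nonneg_left h.le (by linarith)
      have t2 : 0 ≤ 2*((m:ℝ)*((n:ℝ)-k))*(1-Real.cos x^2) :=
        mul_nonneg (by linarith) (by linarith)
      linarith
  have hDne : 2*(m:ℝ)*n - k*((m:ℝ)+n) + k*((m:ℝ)-n)*Real.cos (2*x) ≠ 0 := ne_of_gt hDpos
  have R5 : (Real.cos x * s1) * (Real.cos x * s1) + (-Real.sin x * s2) * (-Real.sin x * s2)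
      + d3 * d3 =
      -(k:ℝ) * ((m:ℝ) + n - ((m:ℝ) - n) * Real.cos (2*x)) /
        (2*(m:ℝ)*n - k*((m:ℝ)+n) + k*((m:ℝ)-n)*Real.cos (2*x)) := by
    rw [p5a, p5b, p5c, hG2]
    simp only [hgdef]
    rw [hs2x, hc2]
    rw [hc2] at hDne
    have hg : (n:ℝ) * Real.cos x ^ 2 / ((n:ℝ) - k) + (m:ℝ) * (1 - Real.cos x ^ 2) / ((m:ℝ) - k)
        = ((n:ℝ)*Real.cos x^2*((m:ℝ)-k) + (m:ℝ)*(1-Real.cos x^2)*((n:ℝ)-k))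
          / (((n:ℝ)-k)*((m:ℝ)-k)) := by
      field_simp
    rw [hg]
    generalize hE : (n:ℝ)*Real.cos x^2*((m:ℝ)-k) + (m:ℝ)*(1-Real.cos x^2)*((n:ℝ)-k) = E at hgne2
    generalize hD : 2*(m:ℝ)*n - k*((m:ℝ)+n) + k*((m:ℝ)-n)*(2 * Real.cos x ^ 2 - 1) = D at hDne
    field_simp
    subst hE hD
    ring
  have R6 : 4*Real.pi^2*((m:ℝ)^2 * (u1 x * u1 x) + (n:ℝ)^2 * (u2 x * u2 x)
      + (k:ℝ)^2 * (u3 x * u3 x)) =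
      -2*(k:ℝ)*Real.pi^2*((m:ℝ) + n - ((m:ℝ) - n) * Real.cos (2*x)) := by
    rw [p1, p2, p3]
    simp only [hgdef]
    rw [hs2x, hc2]
    field_simp
    ring
  -- the six goals
  refine ⟨?_, ?_, ?_, ?_, ?_, ?_⟩
  · rw [hr x y, ← hEm, ← hEn, ← hEk, herm_mul _ _ _ _ _ _ _ _ _ hcm hcn hck,
      Complex.conj_ofReal, Complex.conj_ofReal, Complex.conj_ofReal]
    exact_mod_cast R1
  · rw [hpdx, hr x y, ← hEm, ← hEn, ← hEk, herm_mul _ _ _ _ _ _ _ _ _ hcm hcn hck,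
      Complex.conj_ofReal, Complex.conj_ofReal, Complex.conj_ofReal]
    exact_mod_cast R2
  · rw [hpdy, hr x y, ← hEm, ← hEn, ← hEk, herm_mul _ _ _ _ _ _ _ _ _ hcm hcn hck,
      Complex.conj_ofReal, Complex.conj_ofReal, Complex.conj_ofReal]
    have R3C : (((m:ℝ):ℂ)) * ((u1 x : ℂ) * (u1 x : ℂ)) + (((n:ℝ):ℂ)) * ((u2 x : ℂ) * (u2 x : ℂ))
        + (((k:ℝ):ℂ)) * ((u3 x : ℂ) * (u3 x : ℂ)) = 0 := by exact_mod_cast R3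
    linear_combination (2*((Real.pi:ℝ):ℂ)*Complex.I) * R3C
  · rw [hpdx, hpdy, herm_mul _ _ _ _ _ _ _ _ _ hcm hcn hck]
    simp only [map_mul, Complex.conj_ofReal, Complex.conj_I, map_ofNat]
    have R4C : (((m:ℝ):ℂ)) * (((Real.cos x * s1 : ℝ):ℂ) * (u1 x : ℂ))
        + (((n:ℝ):ℂ)) * (((-Real.sin x * s2 : ℝ):ℂ) * (u2 x : ℂ))
        + (((k:ℝ):ℂ)) * (((d3:ℝ):ℂ) * (u3 x : ℂ)) = 0 := by exact_mod_cast R4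
    linear_combination (-2*((Real.pi:ℝ):ℂ)*Complex.I) * R4C
  · rw [hpdx, herm_mul _ _ _ _ _ _ _ _ _ hcm hcn hck,
      Complex.conj_ofReal, Complex.conj_ofReal, Complex.conj_ofReal]
    exact_mod_cast R5
  · rw [hpdy, herm_mul _ _ _ _ _ _ _ _ _ hcm hcn hck]
    simp only [map_mul, Complex.conj_ofReal, Complex.conj_I, map_ofNat]
    have R6C : 4*((Real.pi:ℝ):ℂ)^2*((((m:ℝ):ℂ))^2 * ((u1 x : ℂ) * (u1 x : ℂ))
        + (((n:ℝ):ℂ))^2 * ((u2 x : ℂ) * (u2 x : ℂ))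
        + (((k:ℝ):ℂ))^2 * ((u3 x : ℂ) * (u3 x : ℂ)))
        = (((-2*(k:ℝ)*Real.pi^2*((m:ℝ) + n - ((m:ℝ) - n) * Real.cos (2*x)) : ℝ)) : ℂ) := by
      exact_mod_cast R6
    linear_combination R6C - (4*((Real.pi:ℝ):ℂ)^2*((((m:ℝ):ℂ))^2 * ((u1 x : ℂ) * (u1 x : ℂ))
        + (((n:ℝ):ℂ))^2 * ((u2 x : ℂ) * (u2 x : ℂ))
        + (((k:ℝ):ℂ))^2 * ((u3 x : ℂ) * (u3 x : ℂ)))) * Complex.I_sq
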